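/- Let d > −1 with d ≠ 0, let p be a probability vector on n ≥ 2 symbols, let l be a codeword-length vector, and let j be any index. Then R^d(p,l) ≥ l_j + (1/d)·log₂( p_j^(1+d) + (1−p_j)^(1+d)·(2^(l_j) − 1)^(−d) ). -/

import Mathlib

open Real Finset

/-- A valid codeword-length vector: all lengths at least 1 and the Kraft inequality holds. -/
def IsCode (n : ℕ) (l : Fin n → ℕ) : Prop :=
  (∀ i, 1 ≤ l i) ∧ ∑ i, (2 : ℝ) ^ (-(l i : ℝ)) ≤ 1

/-- Exponential redundancy `R^d(p,l)`. -/
noncomputable def expRedundancy (n : ℕ) (d : ℝ) (p : Fin n → ℝ) (l : Fin n → ℕ) : ℝ :=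
  (1 / d) * Real.logb 2 (∑ i, (p i) ^ (1 + d) * (2 : ℝ) ^ (d * (l i : ℝ)))

private lemma holder_aux {ι : Type*} (s : Finset ι) {θ : ℝ} (hθ : 0 < θ) (hθ1 : θ < 1)
    (a b : ι → ℝ) (ha : ∀ i ∈ s, 0 ≤ a i) (hb : ∀ i ∈ s, 0 ≤ b i) :
    ∑ i ∈ s, (a i) ^ θ * (b i) ^ (1 - θ) ≤ (∑ i ∈ s, a i) ^ θ * (∑ i ∈ s, b i) ^ (1 - θ) := by
  have h1θ : 0 < 1 - θ := by linarith
  have hpq : Real.HolderConjugate (1/θ) (1/(1-θ)) := by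
    rw [Real.holderConjugate_iff]
    constructor
    · rw [lt_div_iff₀ hθ]; linarith
    · rw [one_div, inv_inv, one_div, inv_inv]; ring
  have H := Real.inner_le_Lp_mul_Lq_of_nonneg (f := fun i => (a i) ^ θ)
    (g := fun i => (b i) ^ (1 - θ)) (s := s) hpq
    (fun i hi => Real.rpow_nonneg (ha i hi) _)
    (fun i hi => Real.rpow_nonneg (hb i hi) _)
  simp only [one_div_one_div] at H
  calc ∑ i ∈ s, (a i) ^ θ * (b i) ^ (1 - θ) ≤
      (∑ i ∈ s, ((a i) ^ θ) ^ (1/θ)) ^ θ *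
      (∑ i ∈ s, ((b i) ^ (1-θ)) ^ (1/(1-θ))) ^ (1 - θ) := H
    _ = (∑ i ∈ s, a i) ^ θ * (∑ i ∈ s, b i) ^ (1 - θ) := by
        congr 1
        · congr 1
          refine Finset.sum_congr rfl fun i hi => ?_
          rw [← Real.rpow_mul (ha i hi), mul_one_div_cancel hθ.ne', Real.rpow_one]
        · congr 1
          refine Finset.sum_congr rfl fun i hi => ?_
          rw [← Real.rpow_mul (hb i hi), mul_one_div_cancel h1θ.ne', Real.rpow_one]

theorem stmt_4 (n : ℕ) (hn : 2 ≤ n) (d : ℝ) (hd : -1 < d) (hd0 : d ≠ 0)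
    (p : Fin n → ℝ) (hp : ∀ i, 0 < p i) (hpsum : ∑ i, p i = 1)
    (l : Fin n → ℕ) (hl : IsCode n l) (j : Fin n) :
    (l j : ℝ) + (1 / d) * Real.logb 2
        ((p j) ^ (1 + d) + (1 - p j) ^ (1 + d) * ((2 : ℝ) ^ (l j : ℝ) - 1) ^ (-d))
      ≤ expRedundancy n d p l := by
  obtain ⟨hl1, hkraft⟩ := hl
  have hd1 : (0:ℝ) < 1 + d := by linarith
  set L : ℝ := (l j : ℝ) with hLdef
  have hL1 : (1:ℝ) ≤ L := by rw [hLdef]; exact_mod_cast hl1 j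
  have h2L1 : (1:ℝ) < (2:ℝ) ^ L :=
    (Real.one_lt_rpow_iff_of_pos two_pos).mpr (Or.inl ⟨one_lt_two, by linarith⟩)
  set K : ℝ := 1 - (2:ℝ) ^ (-L) with hKdef
  have hK0 : 0 < K := by
    have : (2:ℝ) ^ (-L) < 1 := Real.rpow_lt_one_of_one_lt_of_neg one_lt_two (by linarith)
    simp only [hKdef]; linarith
  have h2L2L : (2:ℝ) ^ L * (2:ℝ) ^ (-L) = 1 := by
    rw [← Real.rpow_add two_pos]; simp
  have hKeq : K = ((2:ℝ) ^ L - 1) * (2:ℝ) ^ (-L) := by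
    rw [sub_mul, h2L2L, one_mul]
  set s : Finset (Fin n) := Finset.univ.erase j with hsdef
  have hs : s.Nonempty := by
    rw [← Finset.card_pos, hsdef, Finset.card_erase_of_mem (Finset.mem_univ j),
      Finset.card_univ, Fintype.card_fin]
    omega
  set P : ℝ := ∑ i ∈ s, p i with hPdef
  have hP0 : 0 < P := Finset.sum_pos (fun i _ => hp i) hs
  have hPj : P = 1 - p j := by
    have h := Finset.sum_erase_add Finset.univ p (Finset.mem_univ j)
    rw [hpsum] at h
    simp only [hPdef, hsdef]; linarith
  have hkraftS : ∑ i ∈ s, (2:ℝ) ^ (-(l i : ℝ)) ≤ K := by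
    have h := Finset.sum_erase_add Finset.univ (fun i => (2:ℝ) ^ (-(l i : ℝ)))
      (Finset.mem_univ j)
    simp only [hKdef, hsdef]
    have h2 : ∑ i ∈ Finset.univ.erase j, (2:ℝ) ^ (-(l i : ℝ)) + (2:ℝ) ^ (-L) ≤ 1 := by
      rw [hLdef]; rw [h]; exact hkraft
    linarith
  set B : ℝ := ∑ i ∈ s, p i ^ (1 + d) * (2:ℝ) ^ (d * (l i : ℝ)) with hBdef
  have hB0 : 0 < B := Finset.sum_pos (fun i _ => mul_pos (Real.rpow_pos_of_pos (hp i) _)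
    (Real.rpow_pos_of_pos two_pos _)) hs
  set S : ℝ := ∑ i, p i ^ (1 + d) * (2:ℝ) ^ (d * (l i : ℝ)) with hSdef
  have hSsplit : S = B + p j ^ (1 + d) * (2:ℝ) ^ (d * L) := by
    rw [hSdef, hBdef, hsdef, hLdef,
      Finset.sum_erase_add Finset.univ _ (Finset.mem_univ j)]
  have hS0 : 0 < S := by
    have := mul_pos (Real.rpow_pos_of_pos (hp j) (1 + d)) (Real.rpow_pos_of_pos two_pos (d * L))
    linarith
  have hKd : 0 < K ^ d := Real.rpow_pos_of_pos hK0 d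
  have hsum2 : 0 ≤ ∑ i ∈ s, (2:ℝ) ^ (-(l i : ℝ)) :=
    Finset.sum_nonneg fun i _ => (Real.rpow_pos_of_pos two_pos _).le
  -- main inequality
  have hmain : (0 < d → P ^ (1 + d) * K ^ (-d) ≤ B) ∧ (d < 0 → B ≤ P ^ (1 + d) * K ^ (-d)) := by
    constructor
    · intro hdpos
      set θ : ℝ := d / (1 + d) with hθdef
      have hθ0 : 0 < θ := div_pos hdpos hd1
      have hθ1 : θ < 1 := (div_lt_one hd1).mpr (by linarith)
      have h1θ : 1 - θ = 1 / (1 + d) := by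
        rw [hθdef]; field_simp; ring
      have hpt : ∀ i ∈ s, ((2:ℝ) ^ (-(l i : ℝ))) ^ θ *
          (p i ^ (1 + d) * (2:ℝ) ^ (d * (l i : ℝ))) ^ (1 - θ) = p i := by
        intro i _
        set x : ℝ := (l i : ℝ)
        rw [h1θ, Real.mul_rpow (Real.rpow_nonneg (hp i).le _) (Real.rpow_nonneg two_pos.le _),
          ← Real.rpow_mul (hp i).le, mul_one_div_cancel hd1.ne', Real.rpow_one,
          ← Real.rpow_mul two_pos.le, ← Real.rpow_mul two_pos.le]
        rw [mul_comm (((2:ℝ)) ^ (-x * θ)) _, mul_assoc, ← Real.rpow_add two_pos]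
        have : d * x * (1 / (1 + d)) + -x * θ = 0 := by
          rw [hθdef]; field_simp; ring
        rw [this, Real.rpow_zero, mul_one]
      have hH := holder_aux s hθ0 hθ1 (fun i => (2:ℝ) ^ (-(l i : ℝ)))
        (fun i => p i ^ (1 + d) * (2:ℝ) ^ (d * (l i : ℝ)))
        (fun i _ => (Real.rpow_pos_of_pos two_pos _).le)
        (fun i _ => (mul_pos (Real.rpow_pos_of_pos (hp i) _)
          (Real.rpow_pos_of_pos two_pos _)).le)
      rw [Finset.sum_congr rfl hpt] at hH
      have hH2 : P ≤ K ^ θ * B ^ (1 - θ) := by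
        refine le_trans hH (mul_le_mul_of_nonneg_right ?_ (Real.rpow_nonneg hB0.le _))
        exact Real.rpow_le_rpow hsum2 hkraftS hθ0.le
      have hH3 : P ^ (1 + d) ≤ K ^ d * B := by
        have := Real.rpow_le_rpow hP0.le hH2 hd1.le
        rwa [Real.mul_rpow (Real.rpow_nonneg hK0.le _) (Real.rpow_nonneg hB0.le _),
          ← Real.rpow_mul hK0.le, ← Real.rpow_mul hB0.le,
          div_mul_cancel₀ d hd1.ne', h1θ, one_div_mul_cancel hd1.ne', Real.rpow_one] at this
      rw [Real.rpow_neg hK0.le, mul_inv_le_iff₀ hKd, mul_comm (K ^ d) B] at *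
      linarith [hH3]
    · intro hdneg
      set θ : ℝ := -d with hθdef
      have hθ0 : 0 < θ := by simp [hθdef]; linarith
      have hθ1 : θ < 1 := by simp [hθdef]; linarith
      have hpt : ∀ i ∈ s, p i ^ (1 + d) * (2:ℝ) ^ (d * (l i : ℝ)) =
          ((2:ℝ) ^ (-(l i : ℝ))) ^ θ * (p i) ^ (1 - θ) := by
        intro i _
        rw [← Real.rpow_mul two_pos.le]
        have h1 : -(l i : ℝ) * θ = d * (l i : ℝ) := by rw [hθdef]; ring
        have h2 : 1 - θ = 1 + d := by rw [hθdef]; ring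
        rw [h1, h2, mul_comm]
      have hH := holder_aux s hθ0 hθ1 (fun i => (2:ℝ) ^ (-(l i : ℝ))) p
        (fun i _ => (Real.rpow_pos_of_pos two_pos _).le) (fun i _ => (hp i).le)
      rw [← Finset.sum_congr rfl hpt] at hH
      have hH2 : B ≤ K ^ θ * P ^ (1 - θ) := by
        refine le_trans hH (mul_le_mul_of_nonneg_right ?_ (Real.rpow_nonneg hP0.le _))
        exact Real.rpow_le_rpow hsum2 hkraftS hθ0.le
      have h2 : (1:ℝ) - θ = 1 + d := by rw [hθdef]; ring
      rw [h2, hθdef, mul_comm] at hH2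
      exact hH2
  -- rewrite target
  set A : ℝ := p j ^ (1 + d) + (1 - p j) ^ (1 + d) * ((2:ℝ) ^ L - 1) ^ (-d) with hAdef
  have hA0 : 0 < A := by
    have h1 : 0 < p j ^ (1 + d) := Real.rpow_pos_of_pos (hp j) _
    have h2 : 0 < (1 - p j) ^ (1 + d) := Real.rpow_pos_of_pos (by linarith [hPj ▸ hP0]) _
    have h3 : 0 < ((2:ℝ) ^ L - 1) ^ (-d) := Real.rpow_pos_of_pos (by linarith) _
    positivity
  set T : ℝ := p j ^ (1 + d) * (2:ℝ) ^ (d * L) + P ^ (1 + d) * K ^ (-d) with hTdef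
  have hT0 : 0 < T := by
    have h1 := mul_pos (Real.rpow_pos_of_pos (hp j) (1 + d)) (Real.rpow_pos_of_pos two_pos (d * L))
    have h2 := mul_pos (Real.rpow_pos_of_pos hP0 (1 + d)) (Real.rpow_pos_of_pos hK0 (-d))
    simp only [hTdef]; linarith
  have hTA : T = (2:ℝ) ^ (d * L) * A := by
    have hKnd : K ^ (-d) = ((2:ℝ) ^ L - 1) ^ (-d) * (2:ℝ) ^ (d * L) := by
      rw [hKeq, Real.mul_rpow (by linarith) (Real.rpow_nonneg two_pos.le _),
        ← Real.rpow_mul two_pos.le]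
      congr 1
      ring
    rw [hTdef, hAdef, hKnd, ← hPj]
    ring
  have hLHS : L + (1 / d) * Real.logb 2 A = (1 / d) * Real.logb 2 T := by
    rw [hTA, Real.logb_mul (by positivity) hA0.ne', Real.logb_rpow two_pos (by norm_num)]
    field_simp
  show L + (1 / d) * Real.logb 2 A ≤ (1 / d) * Real.logb 2 S
  rw [hLHS]
  rcases hd0.lt_or_gt with hdneg | hdpos
  · have hST : S ≤ T := by
      have := hmain.2 hdneg
      rw [hSsplit, hTdef]; linarith
    have hlog : Real.logb 2 S ≤ Real.logb 2 T :=
      Real.logb_le_logb_of_le one_lt_two hS0 hST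
    have h1d : (1:ℝ) / d ≤ 0 := by
      rw [div_nonpos_iff]; exact Or.inl ⟨zero_le_one, hdneg.le⟩
    exact mul_le_mul_of_nonpos_left hlog h1d
  · have hTS : T ≤ S := by
      have := hmain.1 hdpos
      rw [hSsplit, hTdef]; linarith
    have hlog : Real.logb 2 T ≤ Real.logb 2 S :=
      Real.logb_le_logb_of_le one_lt_two hT0 hTS
    have h1d : (0:ℝ) ≤ 1 / d := by positivity
    exact mul_le_mul_of_nonneg_left hlog h1d
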